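/- Let (V₁, ⟨·,·⟩_h, V₂, B) be a step-two Carnot datum with dim V₁ = m, let g be any inner product on V₂, and let T ∈ V₂, U, V ∈ V₁ satisfy B(U,V) = T. Then ‖T‖_g ≤ √m · (1 + δ(g))^{1/2} · ‖U‖_h · ‖V‖_h. -/

import Mathlib

open scoped RealInnerProductSpace

noncomputable section

variable {V₁ : Type*} [NormedAddCommGroup V₁] [InnerProductSpace ℝ V₁] [FiniteDimensional ℝ V₁]
variable {V₂ : Type*} [AddCommGroup V₂] [Module ℝ V₂] [FiniteDimensional ℝ V₂]

/-- `g` is an inner product (symmetric positive-definite bilinear form) on `V₂`. -/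
structure IsInnerProd (g : V₂ →ₗ[ℝ] V₂ →ₗ[ℝ] ℝ) : Prop where
  symm : ∀ s t : V₂, g s t = g t s
  posdef : ∀ t : V₂, t ≠ 0 → 0 < g t t

/-- The norm `‖t‖_g = √(g t t)` associated to a vertical inner product `g`. -/
def gnorm (g : V₂ →ₗ[ℝ] V₂ →ₗ[ℝ] ℝ) (t : V₂) : ℝ := Real.sqrt (g t t)

/-- The Hilbert–Schmidt norm `‖F‖_HS = √(trace(F* F))` of an endomorphism of the
inner product space `V₁`. -/
def hsNorm (F : V₁ →ₗ[ℝ] V₁) : ℝ :=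
  Real.sqrt (LinearMap.trace ℝ V₁ (LinearMap.adjoint F ∘ₗ F))

/-- `J` is the J-operator of the bracket `B` with respect to the vertical inner product `g`:
`⟨J_T U, V⟩_h = g(B(U,V), T)` for all `U V : V₁`, `T : V₂`. -/
def IsJOp (B : V₁ →ₗ[ℝ] V₁ →ₗ[ℝ] V₂) (g : V₂ →ₗ[ℝ] V₂ →ₗ[ℝ] ℝ)
    (J : V₂ → V₁ →ₗ[ℝ] V₁) : Prop :=
  ∀ (T : V₂) (U V : V₁), ⟪J T U, V⟫ = g (B U V) T

/-- The H-type deviation relative to a fixed vertical inner product `g` with J-operator `J`: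
`δ(g) = (dim V₁)^{-1/2} sup { ‖(J_T)² + id‖_HS : ‖T‖_g = 1 }`. -/
def deltaOf (g : V₂ →ₗ[ℝ] V₂ →ₗ[ℝ] ℝ) (J : V₂ → V₁ →ₗ[ℝ] V₁) : ℝ :=
  (Real.sqrt (Module.finrank ℝ V₁))⁻¹ *
    sSup ((fun T => hsNorm (J T ∘ₗ J T + LinearMap.id)) '' {T : V₂ | gnorm g T = 1})

/-- The H-type deviation of a step-two Carnot datum: the infimum of `δ(g)` over all vertical
inner products `g` on `V₂`. -/
def htypeDeviation (B : V₁ →ₗ[ℝ] V₁ →ₗ[ℝ] V₂) : ℝ :=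
  sInf { d : ℝ | ∃ (g : V₂ →ₗ[ℝ] V₂ →ₗ[ℝ] ℝ) (J : V₂ → V₁ →ₗ[ℝ] V₁),
    IsInnerProd g ∧ IsJOp B g J ∧ d = deltaOf g J }

end

noncomputable section AuxHS
set_option linter.unusedSectionVars false

open scoped RealInnerProductSpace

variable {V₁ : Type*} [NormedAddCommGroup V₁] [InnerProductSpace ℝ V₁] [FiniteDimensional ℝ V₁]

lemma trace_eq_sum_inner_aux {ι : Type*} [Fintype ι] [DecidableEq ι]
    (e : OrthonormalBasis ι ℝ V₁) (F : V₁ →ₗ[ℝ] V₁) :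
    LinearMap.trace ℝ V₁ F = ∑ i, ⟪e i, F (e i)⟫ := by
  rw [LinearMap.trace_eq_matrix_trace ℝ e.toBasis, Matrix.trace]
  refine Finset.sum_congr rfl fun i _ => ?_
  rw [Matrix.diag_apply, LinearMap.toMatrix_apply, e.coe_toBasis, e.coe_toBasis_repr_apply,
    e.repr_apply_apply]

lemma hsNorm_eq_aux {ι : Type*} [Fintype ι] [DecidableEq ι]
    (e : OrthonormalBasis ι ℝ V₁) (F : V₁ →ₗ[ℝ] V₁) :
    hsNorm F = Real.sqrt (∑ i, ‖F (e i)‖ ^ 2) := by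
  unfold hsNorm
  rw [trace_eq_sum_inner_aux e]
  congr 1
  refine Finset.sum_congr rfl fun i _ => ?_
  rw [LinearMap.comp_apply, LinearMap.adjoint_inner_right, real_inner_self_eq_norm_sq]

lemma hsNorm_nonneg_aux (F : V₁ →ₗ[ℝ] V₁) : 0 ≤ hsNorm F := Real.sqrt_nonneg _

lemma parseval_aux {ι : Type*} [Fintype ι] [DecidableEq ι]
    (e : OrthonormalBasis ι ℝ V₁) (U : V₁) :
    ∑ i, ⟪e i, U⟫ ^ 2 = ‖U‖ ^ 2 := by
  calc ∑ i, ⟪e i, U⟫ ^ 2 = ∑ i, ⟪U, e i⟫ * ⟪e i, U⟫ := by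
        refine Finset.sum_congr rfl fun i _ => ?_
        rw [sq, real_inner_comm (e i) U]
    _ = ⟪U, U⟫ := e.sum_inner_mul_inner U U
    _ = ‖U‖ ^ 2 := real_inner_self_eq_norm_sq U

lemma norm_apply_le_hsNorm (F : V₁ →ₗ[ℝ] V₁) (U : V₁) : ‖F U‖ ≤ hsNorm F * ‖U‖ := by
  classical
  set e := stdOrthonormalBasis ℝ V₁ with he
  rw [hsNorm_eq_aux e]
  calc ‖F U‖ = ‖∑ i, ⟪e i, U⟫ • F (e i)‖ := by
        conv_lhs => rw [← e.sum_repr' U]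
        rw [map_sum]
        simp_rw [map_smul]
    _ ≤ ∑ i, |⟪e i, U⟫| * ‖F (e i)‖ := by
        refine (norm_sum_le _ _).trans ?_
        refine Finset.sum_le_sum fun i _ => ?_
        rw [norm_smul, Real.norm_eq_abs]
    _ ≤ Real.sqrt (∑ i, |⟪e i, U⟫| ^ 2) * Real.sqrt (∑ i, ‖F (e i)‖ ^ 2) :=
        Real.sum_mul_le_sqrt_mul_sqrt _ _ _
    _ = Real.sqrt (∑ i, ‖F (e i)‖ ^ 2) * ‖U‖ := by
        rw [mul_comm]
        congr 1
        have h : ∑ i, |⟪e i, U⟫| ^ 2 = ‖U‖ ^ 2 := by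
          simp_rw [sq_abs]
          exact parseval_aux e U
        rw [h, Real.sqrt_sq (norm_nonneg U)]

lemma bilin_bound_aux {W : Type*} [NormedAddCommGroup W] [NormedSpace ℝ W]
    (B : V₁ →ₗ[ℝ] V₁ →ₗ[ℝ] W) :
    ∃ C : ℝ, 0 ≤ C ∧ ∀ U V : V₁, ‖B U V‖ ≤ C * ‖U‖ * ‖V‖ := by
  classical
  set e := stdOrthonormalBasis ℝ V₁ with he
  refine ⟨∑ i, ∑ j, ‖B (e i) (e j)‖, by positivity, fun U V => ?_⟩
  have hcoe : ∀ (X : V₁) i, |⟪e i, X⟫| ≤ ‖X‖ := by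
    intro X i
    refine (abs_real_inner_le_norm _ _).trans ?_
    rw [e.orthonormal.1 i, one_mul]
  calc ‖B U V‖ = ‖∑ i, ∑ j, (⟪e i, U⟫ * ⟪e j, V⟫) • B (e i) (e j)‖ := by
        conv_lhs => rw [← e.sum_repr' U, ← e.sum_repr' V]
        simp only [map_sum, map_smul, LinearMap.sum_apply, LinearMap.smul_apply,
          Finset.smul_sum, smul_smul]
        rw [Finset.sum_comm]
        simp only [mul_comm]
    _ ≤ ∑ i, ∑ j, |⟪e i, U⟫ * ⟪e j, V⟫| * ‖B (e i) (e j)‖ := by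
        refine (norm_sum_le _ _).trans (Finset.sum_le_sum fun i _ => ?_)
        refine (norm_sum_le _ _).trans (Finset.sum_le_sum fun j _ => ?_)
        rw [norm_smul, Real.norm_eq_abs]
    _ ≤ ∑ i, ∑ j, ‖B (e i) (e j)‖ * ‖U‖ * ‖V‖ := by
        refine Finset.sum_le_sum fun i _ => Finset.sum_le_sum fun j _ => ?_
        rw [abs_mul]
        calc |⟪e i, U⟫| * |⟪e j, V⟫| * ‖B (e i) (e j)‖
            ≤ ‖U‖ * ‖V‖ * ‖B (e i) (e j)‖ := by
              refine mul_le_mul_of_nonneg_right ?_ (norm_nonneg _)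
              exact mul_le_mul (hcoe U i) (hcoe V j) (abs_nonneg _) (norm_nonneg _)
          _ = ‖B (e i) (e j)‖ * ‖U‖ * ‖V‖ := by ring
    _ = (∑ i, ∑ j, ‖B (e i) (e j)‖) * ‖U‖ * ‖V‖ := by
        rw [Finset.sum_mul, Finset.sum_mul]
        refine Finset.sum_congr rfl fun i _ => ?_
        rw [Finset.sum_mul, Finset.sum_mul]

end AuxHS

noncomputable section

open scoped RealInnerProductSpace

theorem gnorm_le_of_bracket
    {V₁ : Type*} [NormedAddCommGroup V₁] [InnerProductSpace ℝ V₁] [FiniteDimensional ℝ V₁]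
    {V₂ : Type*} [AddCommGroup V₂] [Module ℝ V₂] [FiniteDimensional ℝ V₂]
    (m : ℕ) (hm : 1 ≤ m) (hdim₁ : Module.finrank ℝ V₁ = m)
    (hdim₂ : 1 ≤ Module.finrank ℝ V₂)
    (B : V₁ →ₗ[ℝ] V₁ →ₗ[ℝ] V₂)
    (hAlt : ∀ U : V₁, B U U = 0)
    (hSpan : Submodule.span ℝ {t : V₂ | ∃ U V : V₁, B U V = t} = ⊤)
    (g : V₂ →ₗ[ℝ] V₂ →ₗ[ℝ] ℝ) (hg : IsInnerProd g)
    (J : V₂ → V₁ →ₗ[ℝ] V₁) (hJ : IsJOp B g J)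
    (T : V₂) (U V : V₁) (hT : B U V = T) :
    gnorm g T ≤ Real.sqrt m * Real.sqrt (1 + deltaOf g J) * ‖U‖ * ‖V‖ := by
  classical
  have hgnn : ∀ x : V₂, 0 ≤ g x x := by
    intro x
    rcases eq_or_ne x 0 with rfl | h
    · simp
    · exact (hg.posdef x h).le
  -- install inner product space structure on V₂
  letI cg : InnerProductSpace.Core ℝ V₂ :=
    { inner := fun x y => g x y
      conj_inner_symm := fun x y => by simpa using hg.symm y x
      re_inner_nonneg := fun x => hgnn x
      add_left := fun x y z => by simp
      smul_left := fun x y r => by simp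
      definite := fun x hx => by
        by_contra h
        exact absurd hx (ne_of_gt (hg.posdef x h)) }
  letI : NormedAddCommGroup V₂ := @InnerProductSpace.Core.toNormedAddCommGroup ℝ V₂ _ _ _ cg
  letI : InnerProductSpace ℝ V₂ := InnerProductSpace.ofCore cg.toCore
  have hinner : ∀ x y : V₂, ⟪x, y⟫ = g x y := fun x y => rfl
  have hnorm : ∀ x : V₂, ‖x‖ = gnorm g x := by
    intro x
    rw [norm_eq_sqrt_real_inner, hinner x x]
    rfl
  -- bound on B
  obtain ⟨C, hC0, hCB⟩ := bilin_bound_aux B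
  -- antisymmetry of B and skewness of J
  have hBanti : ∀ X Y : V₁, B X Y = -B Y X := by
    intro X Y
    have h := hAlt (X + Y)
    simp only [map_add, LinearMap.add_apply, hAlt X, hAlt Y, zero_add, add_zero] at h
    exact eq_neg_of_add_eq_zero_right h
  have hskew : ∀ (S : V₂) (X Y : V₁), ⟪J S X, Y⟫ = -⟪X, J S Y⟫ := by
    intro S X Y
    have h1 : ⟪X, J S Y⟫ = -(g (B X Y) S) := by
      rw [real_inner_comm, hJ, hBanti Y X]
      simp
    rw [hJ, h1, neg_neg]
  -- the sup set
  set Sset := ((fun T' => hsNorm (J T' ∘ₗ J T' + (LinearMap.id : V₁ →ₗ[ℝ] V₁))) '' {T' : V₂ | gnorm g T' = 1})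
    with hSset
  -- bound on J for unit T'
  have hJTbound : ∀ T' : V₂, gnorm g T' = 1 → ∀ X : V₁, ‖J T' X‖ ≤ C * ‖X‖ := by
    intro T' hT' X
    have hT'n : ‖T'‖ = 1 := by rw [hnorm]; exact hT'
    have h1 : ‖J T' X‖ ^ 2 = g (B X (J T' X)) T' := by
      rw [← real_inner_self_eq_norm_sq, hJ]
    have h3 : ⟪B X (J T' X), T'⟫ ≤ ‖B X (J T' X)‖ * ‖T'‖ := real_inner_le_norm _ _
    rw [hinner, hT'n, mul_one] at h3
    have h4 : ‖B X (J T' X)‖ ≤ C * ‖X‖ * ‖J T' X‖ := hCB _ _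
    have h5 : ‖J T' X‖ ^ 2 ≤ C * ‖X‖ * ‖J T' X‖ := by
      rw [h1]; exact h3.trans h4
    rcases (norm_nonneg (J T' X)).eq_or_lt with h0 | h0
    · rw [← h0]; positivity
    · nlinarith
  -- boundedness of the sup set
  have hSbdd : BddAbove Sset := by
    refine ⟨Real.sqrt m * (C ^ 2 + 1), ?_⟩
    rintro x ⟨T', hT', rfl⟩
    set e := stdOrthonormalBasis ℝ V₁ with he
    show hsNorm (J T' ∘ₗ J T' + (LinearMap.id : V₁ →ₗ[ℝ] V₁)) ≤ _
    rw [hsNorm_eq_aux e]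
    have hterm : ∀ i, ‖(J T' ∘ₗ J T' + (LinearMap.id : V₁ →ₗ[ℝ] V₁)) (e i)‖ ^ 2 ≤ (C ^ 2 + 1) ^ 2 := by
      intro i
      have hei : ‖e i‖ = 1 := e.orthonormal.1 i
      have h1 : ‖(J T' ∘ₗ J T' + (LinearMap.id : V₁ →ₗ[ℝ] V₁)) (e i)‖ ≤ C ^ 2 + 1 := by
        simp only [LinearMap.add_apply, LinearMap.comp_apply, LinearMap.id_apply]
        refine (norm_add_le _ _).trans ?_
        have h2 : ‖J T' (J T' (e i))‖ ≤ C * ‖J T' (e i)‖ := hJTbound T' hT' _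
        have h3 : ‖J T' (e i)‖ ≤ C * ‖e i‖ := hJTbound T' hT' _
        rw [hei, mul_one] at h3
        calc ‖J T' (J T' (e i))‖ + ‖e i‖ ≤ C * C + 1 := by
              rw [hei]
              have := h2.trans (mul_le_mul_of_nonneg_left h3 hC0)
              linarith
          _ = C ^ 2 + 1 := by ring
      exact pow_le_pow_left₀ (norm_nonneg _) h1 2
    calc Real.sqrt (∑ i, ‖(J T' ∘ₗ J T' + (LinearMap.id : V₁ →ₗ[ℝ] V₁)) (e i)‖ ^ 2)
        ≤ Real.sqrt (∑ _i : Fin (Module.finrank ℝ V₁), (C ^ 2 + 1) ^ 2) :=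
          Real.sqrt_le_sqrt (Finset.sum_le_sum fun i _ => hterm i)
      _ = Real.sqrt ((m : ℝ) * (C ^ 2 + 1) ^ 2) := by
          rw [Finset.sum_const, Finset.card_univ, Fintype.card_fin, hdim₁, nsmul_eq_mul]
      _ = Real.sqrt m * (C ^ 2 + 1) := by
          rw [Real.sqrt_mul (Nat.cast_nonneg m), Real.sqrt_sq (by positivity)]
  -- delta is nonnegative
  have hδ0 : 0 ≤ deltaOf g J := by
    unfold deltaOf
    refine mul_nonneg (inv_nonneg.2 (Real.sqrt_nonneg _)) (Real.sSup_nonneg ?_)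
    rintro x ⟨T', _, rfl⟩
    exact hsNorm_nonneg_aux _
  have hm1 : (1 : ℝ) ≤ (m : ℝ) := by exact_mod_cast hm
  have hsm : Real.sqrt m ≠ 0 := by positivity
  -- key bound via the sup
  have hkey : ∀ T' : V₂, gnorm g T' = 1 →
      hsNorm (J T' ∘ₗ J T' + (LinearMap.id : V₁ →ₗ[ℝ] V₁)) ≤ Real.sqrt m * deltaOf g J := by
    intro T' hT'
    have hmem : hsNorm (J T' ∘ₗ J T' + (LinearMap.id : V₁ →ₗ[ℝ] V₁)) ∈ Sset := ⟨T', hT', rfl⟩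
    have hle := le_csSup hSbdd hmem
    have : Real.sqrt m * deltaOf g J = sSup Sset := by
      unfold deltaOf
      rw [hdim₁, ← hSset, ← mul_assoc, mul_inv_cancel₀ hsm, one_mul]
    rw [this]
    exact hle
  -- main computation
  rcases eq_or_ne T 0 with rfl | hT0
  · have : gnorm g (0 : V₂) = 0 := by simp [gnorm]
    rw [this]
    positivity
  · set t := gnorm g T with ht
    have hgTT : 0 < g T T := hg.posdef T hT0
    have ht0 : 0 < t := Real.sqrt_pos.2 hgTT
    have htsq : t ^ 2 = g T T := Real.sq_sqrt hgTT.le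
    set T' := t⁻¹ • T with hT'def
    have hTT' : T = t • T' := by
      rw [hT'def, smul_smul, mul_inv_cancel₀ ht0.ne', one_smul]
    have hT'unit : gnorm g T' = 1 := by
      have : g T' T' = 1 := by
        rw [hT'def]
        simp only [map_smul, LinearMap.smul_apply, smul_eq_mul]
        rw [← htsq]
        field_simp
      unfold gnorm
      rw [this, Real.sqrt_one]
    set K := J T' with hK
    have hJT : ∀ X : V₁, J T X = t • K X := by
      intro X
      refine ext_inner_right ℝ fun W => ?_
      rw [hJ, real_inner_smul_left, hJ, hTT', map_smul, smul_eq_mul]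
    have hδm : 0 ≤ 1 + Real.sqrt m * deltaOf g J := by positivity
    have hKU2 : ‖K U‖ ^ 2 ≤ (1 + Real.sqrt m * deltaOf g J) * ‖U‖ ^ 2 := by
      have h1 : ‖K U‖ ^ 2 = -⟪U, K (K U)⟫ := by
        rw [← real_inner_self_eq_norm_sq, hskew T' U (K U)]
      have h2 : (K ∘ₗ K + (LinearMap.id : V₁ →ₗ[ℝ] V₁)) U = K (K U) + U := rfl
      have h3 : ⟪K (K U) + U, U⟫ = ⟪K (K U), U⟫ + ‖U‖ ^ 2 := by
        rw [inner_add_left, real_inner_self_eq_norm_sq]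
      have h4 : -⟪(K ∘ₗ K + (LinearMap.id : V₁ →ₗ[ℝ] V₁)) U, U⟫ ≤
          hsNorm (K ∘ₗ K + (LinearMap.id : V₁ →ₗ[ℝ] V₁)) * ‖U‖ ^ 2 := by
        refine (neg_le_abs _).trans ?_
        refine (abs_real_inner_le_norm _ _).trans ?_
        have := norm_apply_le_hsNorm (K ∘ₗ K + (LinearMap.id : V₁ →ₗ[ℝ] V₁)) U
        calc ‖(K ∘ₗ K + (LinearMap.id : V₁ →ₗ[ℝ] V₁)) U‖ * ‖U‖
            ≤ (hsNorm (K ∘ₗ K + (LinearMap.id : V₁ →ₗ[ℝ] V₁)) * ‖U‖) * ‖U‖ :=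
              mul_le_mul_of_nonneg_right this (norm_nonneg _)
          _ = hsNorm (K ∘ₗ K + (LinearMap.id : V₁ →ₗ[ℝ] V₁)) * ‖U‖ ^ 2 := by ring
      have h5 := hkey T' hT'unit
      have h6 : -⟪U, K (K U)⟫ = ‖U‖ ^ 2 - ⟪(K ∘ₗ K + (LinearMap.id : V₁ →ₗ[ℝ] V₁)) U, U⟫ := by
        rw [h2, h3, real_inner_comm U (K (K U))]
        ring
      have h7 : ‖U‖ ^ 2 * hsNorm (K ∘ₗ K + (LinearMap.id : V₁ →ₗ[ℝ] V₁)) ≤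
          ‖U‖ ^ 2 * (Real.sqrt m * deltaOf g J) :=
        mul_le_mul_of_nonneg_left h5 (by positivity)
      nlinarith [norm_nonneg U, sq_nonneg (‖U‖)]
    have hKU : ‖K U‖ ≤ Real.sqrt (1 + Real.sqrt m * deltaOf g J) * ‖U‖ := by
      have h := Real.sqrt_le_sqrt hKU2
      rw [Real.sqrt_sq (norm_nonneg _), Real.sqrt_mul hδm, Real.sqrt_sq (norm_nonneg _)] at h
      exact h
    have hmain : t ^ 2 ≤ t * (Real.sqrt (1 + Real.sqrt m * deltaOf g J) * ‖U‖ * ‖V‖) := by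
      rw [htsq]
      calc g T T = g (B U V) T := by rw [hT]
        _ = ⟪J T U, V⟫ := (hJ T U V).symm
        _ = t * ⟪K U, V⟫ := by rw [hJT U, real_inner_smul_left]
        _ ≤ t * (Real.sqrt (1 + Real.sqrt m * deltaOf g J) * ‖U‖ * ‖V‖) := by
            refine mul_le_mul_of_nonneg_left ?_ ht0.le
            calc ⟪K U, V⟫ ≤ ‖K U‖ * ‖V‖ := real_inner_le_norm _ _
              _ ≤ Real.sqrt (1 + Real.sqrt m * deltaOf g J) * ‖U‖ * ‖V‖ :=
                  mul_le_mul_of_nonneg_right hKU (norm_nonneg _)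
    have ht_le : t ≤ Real.sqrt (1 + Real.sqrt m * deltaOf g J) * ‖U‖ * ‖V‖ := by
      nlinarith
    refine ht_le.trans ?_
    have hfin : Real.sqrt (1 + Real.sqrt m * deltaOf g J) ≤
        Real.sqrt m * Real.sqrt (1 + deltaOf g J) := by
      rw [← Real.sqrt_mul (Nat.cast_nonneg m)]
      apply Real.sqrt_le_sqrt
      have h2 : Real.sqrt m ≤ m := by
        have h4 : Real.sqrt m ≤ Real.sqrt ((m : ℝ) ^ 2) :=
          Real.sqrt_le_sqrt (by nlinarith [hm1])
        rwa [Real.sqrt_sq (by positivity)] at h4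
      have h3 : Real.sqrt m * deltaOf g J ≤ m * deltaOf g J :=
        mul_le_mul_of_nonneg_right h2 hδ0
      calc 1 + Real.sqrt m * deltaOf g J ≤ 1 + (m : ℝ) * deltaOf g J := by linarith
        _ ≤ (m : ℝ) + (m : ℝ) * deltaOf g J := by linarith
        _ = (m : ℝ) * (1 + deltaOf g J) := by ring
    refine mul_le_mul_of_nonneg_right ?_ (norm_nonneg V)
    exact mul_le_mul_of_nonneg_right hfin (norm_nonneg U)

end
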